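/- (OGD with dynamic step size) Under the same setup with step sizes η_t = D/(G√t), the iterates of projected online gradient descent satisfy Σ_{t=1}^T ⟨g_t, x_t − x*⟩ ≤ (3/2)·D·G·√T for every x* ∈ F. -/

import Mathlib

open Finset Real RealInnerProductSpace

lemma abel_sum_bound (a b : ℕ → ℝ) (C : ℝ) (hb0 : 0 ≤ b 0) :
    ∀ T : ℕ, (∀ m, m < T → b m ≤ b (m+1)) → (∀ m, m ≤ T → a m ≤ C) →
      ∑ t ∈ Finset.range T, b t * (a t - a (t+1)) ≤ b T * (C - a T) := by
  intro T
  induction T with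
  | zero => intro _ ha; simpa using mul_nonneg hb0 (by linarith [ha 0 le_rfl])
  | succ m ih =>
    intro hbm ha
    have h1 := ih (fun k hk => hbm k (by omega)) (fun k hk => ha k (by omega))
    rw [Finset.sum_range_succ]
    nlinarith [hbm m (by omega), ha (m+1) le_rfl, h1,
      mul_nonneg (sub_nonneg.2 (hbm m (by omega))) (sub_nonneg.2 (ha (m+1) le_rfl))]

lemma sum_inv_sqrt_le (T : ℕ) (hT : 1 ≤ T) :
    ∑ t ∈ Finset.range T, 1 / Real.sqrt (t + 1) ≤ 2 * Real.sqrt T - 1 := by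
  induction T, hT using Nat.le_induction with
  | base => norm_num
  | succ m hm ih =>
    rw [Finset.sum_range_succ]
    have hs : (0:ℝ) ≤ (m:ℝ) := Nat.cast_nonneg m
    have h1 : Real.sqrt m ^ 2 = (m:ℝ) := Real.sq_sqrt hs
    have h2 : Real.sqrt ((m:ℝ)+1) ^ 2 = (m:ℝ)+1 := Real.sq_sqrt (by positivity)
    have h3 : 0 < Real.sqrt ((m:ℝ)+1) := Real.sqrt_pos.mpr (by positivity)
    have h5 : (Real.sqrt m * Real.sqrt ((m:ℝ)+1))^2 = (m:ℝ) * ((m:ℝ)+1) := by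
      rw [mul_pow, h1, h2]
    have key : 1 / Real.sqrt ((m:ℝ)+1) ≤ 2 * Real.sqrt ((m:ℝ)+1) - 2 * Real.sqrt m := by
      rw [div_le_iff₀ h3]
      nlinarith [h5, mul_nonneg (Real.sqrt_nonneg (m:ℝ)) h3.le]
    push_cast
    linarith [ih]

set_option maxHeartbeats 800000 in
theorem stmt_11 (n T : ℕ) (hT : 1 ≤ T) (D G : ℝ) (hD : 0 < D) (hG : 0 < G)
    (F : Set (EuclideanSpace ℝ (Fin n))) (hFne : F.Nonempty)
    (hFclosed : IsClosed F) (hFconv : Convex ℝ F)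
    (hFdiam : ∀ a ∈ F, ∀ b ∈ F, ‖a - b‖ ≤ D)
    (g : Fin T → EuclideanSpace ℝ (Fin n)) (hg : ∀ t, ‖g t‖ ≤ G)
    (P : EuclideanSpace ℝ (Fin n) → EuclideanSpace ℝ (Fin n))
    (hP : ∀ y, P y ∈ F ∧ ∀ z ∈ F, ‖y - P y‖ ≤ ‖y - z‖)
    (η : ℕ → ℝ) (hη : ∀ t : ℕ, η t = D / (G * Real.sqrt (t + 1)))
    (x : ℕ → EuclideanSpace ℝ (Fin n)) (hx0 : x 0 ∈ F)
    (hstep : ∀ t : Fin T, x (t + 1) = P (x t - η t • g t)) :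
    ∀ xstar ∈ F,
      ∑ t : Fin T, (inner ℝ (g t) (x t - xstar) : ℝ) ≤ 3 / 2 * D * G * Real.sqrt T := by
  intro xstar hxs
  have hPmem : ∀ y, P y ∈ F := fun y => (hP y).1
  -- projection variational inequality
  have hproj : ∀ y, ∀ z ∈ F, ⟪y - P y, z - P y⟫ ≤ 0 := by
    intro y
    haveI : Nonempty F := ⟨⟨P y, hPmem y⟩⟩
    have hbdd : BddBelow (Set.range fun w : F => ‖y - (w : EuclideanSpace ℝ (Fin n))‖) := by
      refine ⟨0, ?_⟩
      rintro r ⟨w, rfl⟩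
      exact norm_nonneg _
    have hinf : ‖y - P y‖ = ⨅ w : F, ‖y - (w : EuclideanSpace ℝ (Fin n))‖ :=
      le_antisymm (le_ciInf fun w => (hP y).2 w w.2) (ciInf_le hbdd ⟨P y, hPmem y⟩)
    exact (norm_eq_iInf_iff_real_inner_le_zero hFconv (hPmem y)).mp hinf
  -- squared-norm nonexpansiveness towards points of F
  have hsq : ∀ y, ∀ z ∈ F, ‖P y - z‖^2 ≤ ‖y - z‖^2 := by
    intro y z hz
    have h1 := hproj y z hz
    have h2 : ‖y - z‖^2 = ‖y - P y‖^2 + 2 * ⟪y - P y, P y - z⟫ + ‖P y - z‖^2 := by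
      rw [show y - z = (y - P y) + (P y - z) by abel, @norm_add_sq_real]
    have h3 : ⟪y - P y, P y - z⟫ = - ⟪y - P y, z - P y⟫ := by
      rw [show P y - z = -(z - P y) by abel, inner_neg_right]
    nlinarith [sq_nonneg ‖y - P y‖]
  -- iterates stay in F
  have hmem : ∀ t, t ≤ T → x t ∈ F := by
    intro t
    induction t with
    | zero => intro _; exact hx0
    | succ k _ =>
      intro hk
      have h : x (k+1) = P (x k - η k • g ⟨k, by omega⟩) := hstep ⟨k, by omega⟩
      rw [h]; exact hPmem _
  have hη' : ∀ t : ℕ, 0 < η t := by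
    intro t; rw [hη]
    have : (0:ℝ) < Real.sqrt (t+1) := Real.sqrt_pos.mpr (by positivity)
    positivity
  -- per-step bound
  have hstep2 : ∀ t : Fin T, ⟪g t, x (t:ℕ) - xstar⟫ ≤
      (G * Real.sqrt ((t:ℕ) + 1) / (2*D)) * (‖x (t:ℕ) - xstar‖^2 - ‖x ((t:ℕ)+1) - xstar‖^2)
        + η (t:ℕ) * G^2 / 2 := by
    intro t
    set c := η (t:ℕ) with hc
    set B := G * Real.sqrt ((t:ℕ) + 1) / (2*D) with hBdef
    have hs0 : (0:ℝ) < Real.sqrt ((t:ℕ) + 1) := Real.sqrt_pos.mpr (by positivity)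
    have hB : 0 < B := by rw [hBdef]; positivity
    have hBc : B * c = 1/2 := by
      rw [hBdef, hc, hη]
      field_simp
    have hx1 : x ((t:ℕ)+1) = P (x (t:ℕ) - c • g t) := hstep t
    have hle : ‖x ((t:ℕ)+1) - xstar‖^2 ≤ ‖(x (t:ℕ) - c • g t) - xstar‖^2 := by
      rw [hx1]; exact hsq _ _ hxs
    have hexp : ‖(x (t:ℕ) - c • g t) - xstar‖^2
        = ‖x (t:ℕ) - xstar‖^2 - 2 * c * ⟪g t, x (t:ℕ) - xstar⟫ + c^2 * ‖g t‖^2 := by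
      rw [show (x (t:ℕ) - c • g t) - xstar = (x (t:ℕ) - xstar) - c • g t by abel,
        @norm_sub_sq_real, real_inner_smul_right, norm_smul, Real.norm_eq_abs, mul_pow, sq_abs,
        real_inner_comm]
      ring
    rw [hexp] at hle
    have hgn : ‖g t‖^2 ≤ G^2 := by nlinarith [hg t, norm_nonneg (g t)]
    have key : 2 * c * ⟪g t, x (t:ℕ) - xstar⟫ ≤
        (‖x (t:ℕ) - xstar‖^2 - ‖x ((t:ℕ)+1) - xstar‖^2) + c^2 * G^2 := by
      nlinarith [mul_le_mul_of_nonneg_left hgn (sq_nonneg c)]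
    have h5 := mul_le_mul_of_nonneg_left key hB.le
    calc ⟪g t, x (t:ℕ) - xstar⟫
        = B * (2 * c * ⟪g t, x (t:ℕ) - xstar⟫) := by
          rw [show B * (2 * c * ⟪g t, x (t:ℕ) - xstar⟫)
              = 2 * (B * c) * ⟪g t, x (t:ℕ) - xstar⟫ by ring, hBc]
          ring
      _ ≤ B * ((‖x (t:ℕ) - xstar‖^2 - ‖x ((t:ℕ)+1) - xstar‖^2) + c^2 * G^2) := h5
      _ = B * (‖x (t:ℕ) - xstar‖^2 - ‖x ((t:ℕ)+1) - xstar‖^2) + (B * c) * (c * G^2) := by ring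
      _ = B * (‖x (t:ℕ) - xstar‖^2 - ‖x ((t:ℕ)+1) - xstar‖^2) + c * G^2 / 2 := by
          rw [hBc]; ring
  -- sums
  have hsum1 : ∑ t ∈ Finset.range T,
      (G * Real.sqrt (t + 1) / (2*D)) * (‖x t - xstar‖^2 - ‖x (t+1) - xstar‖^2)
      ≤ D * G * Real.sqrt (T + 1) / 2 := by
    have h := abel_sum_bound (fun t => ‖x t - xstar‖^2)
      (fun t => G * Real.sqrt (t + 1) / (2*D)) (D^2) (by positivity) T
      (fun m _ => by
        show G * Real.sqrt ((m:ℝ) + 1) / (2*D) ≤ G * Real.sqrt (((m+1:ℕ):ℝ) + 1) / (2*D)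
        have h := Real.sqrt_le_sqrt (show ((m:ℝ)+1) ≤ ((m+1:ℕ):ℝ)+1 by push_cast; linarith)
        exact (div_le_div_iff_of_pos_right (by positivity)).mpr
          (mul_le_mul_of_nonneg_left h hG.le))
      (fun m hm => by
        have := hFdiam (x m) (hmem m hm) xstar hxs
        exact pow_le_pow_left₀ (norm_nonneg _) this 2)
    have hbT : (0:ℝ) ≤ G * Real.sqrt ((T:ℝ) + 1) / (2*D) := by positivity
    have haT : (0:ℝ) ≤ ‖x T - xstar‖^2 := by positivity
    have heq : G * Real.sqrt ((T:ℝ) + 1) / (2*D) * D^2 = D * G * Real.sqrt ((T:ℝ) + 1) / 2 := by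
      field_simp
    calc ∑ t ∈ Finset.range T,
        (G * Real.sqrt (t + 1) / (2*D)) * (‖x t - xstar‖^2 - ‖x (t+1) - xstar‖^2)
        ≤ (G * Real.sqrt ((T:ℝ) + 1) / (2*D)) * (D^2 - ‖x T - xstar‖^2) := h
      _ ≤ (G * Real.sqrt ((T:ℝ) + 1) / (2*D)) * D^2 := by nlinarith [mul_nonneg hbT haT]
      _ = D * G * Real.sqrt ((T:ℝ) + 1) / 2 := heq
  have hsum2 : ∑ t ∈ Finset.range T, η t * G^2 / 2
      ≤ D * G / 2 * (2 * Real.sqrt T - 1) := by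
    have heq : ∀ t ∈ Finset.range T, η t * G^2 / 2 = D * G / 2 * (1 / Real.sqrt (t + 1)) := by
      intro t _
      have hs0 : (0:ℝ) < Real.sqrt ((t:ℝ) + 1) := Real.sqrt_pos.mpr (by positivity)
      rw [hη]
      field_simp
    rw [Finset.sum_congr rfl heq, ← Finset.mul_sum]
    have := sum_inv_sqrt_le T hT
    have hDG : (0:ℝ) < D * G / 2 := by positivity
    exact mul_le_mul_of_nonneg_left this hDG.le
  -- combine
  have hmain : ∑ t : Fin T, (inner ℝ (g t) (x t - xstar) : ℝ)
      ≤ ∑ t ∈ Finset.range T,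
        ((G * Real.sqrt (t + 1) / (2*D)) * (‖x t - xstar‖^2 - ‖x (t+1) - xstar‖^2)
          + η t * G^2 / 2) := by
    rw [← Fin.sum_univ_eq_sum_range (fun t =>
      (G * Real.sqrt (t + 1) / (2*D)) * (‖x t - xstar‖^2 - ‖x (t+1) - xstar‖^2)
        + η t * G^2 / 2) T]
    exact Finset.sum_le_sum fun t _ => hstep2 t
  rw [Finset.sum_add_distrib] at hmain
  have hsqrt : Real.sqrt ((T:ℝ) + 1) ≤ Real.sqrt T + 1 := by
    nlinarith [Real.sq_sqrt (show (0:ℝ) ≤ (T:ℝ) + 1 by positivity),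
      Real.sq_sqrt (show (0:ℝ) ≤ (T:ℝ) from Nat.cast_nonneg T),
      Real.sqrt_nonneg ((T:ℝ) + 1), Real.sqrt_nonneg (T:ℝ)]
  nlinarith [hsum1, hsum2, hmain, mul_pos hD hG]
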